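/- Let H be a Hilbert space, A a bounded operator on H, and Ω a unit vector with AΩ ≠ 0. Let P be the spectral measure of a (possibly unbounded) self-adjoint operator M ≥ 0 on H, let m > 0, and suppose (regularity condition A'): for every δ ≥ 0, ‖P([m²−δ, m²+δ])(1−P({m²}))AΩ‖ ≤ c δ^ε for some c, ε > 0. Let g_T : ℝ → ℂ be measurable with |g_T(λ)| ≤ C s(T)^{-1} for all λ and g_T supported in {λ : |λ − m²| ≤ K/s(T)} ∪ {m²}, g_T(m²)=0, where s(T)=T^ν, ν∈(0,1). Then ‖g_T(M)AΩ‖ ≤ c' s(T)^{-(1+ε)} for a constant c' independent of T. -/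

import Mathlib

open MeasureTheory Filter

/-- Abstract spectral form of Herbst's estimate: `μ` is the scalar spectral
measure of the vector `AΩ` for the mass-squared operator `M`; the regularity
condition A' reads `μ([m²-δ, m²+δ] \ {m²}) ≤ (c δ^ε)²`.  If `g_T` is a spectral
multiplier of height `≤ C/s(T)`, supported in a window of width `K/s(T)` around
`m²` (up to the point `m²` itself, where it vanishes), and `nrm T = ‖g_T(M)AΩ‖`
is given by `(nrm T)² = ∫ |g_T|² dμ`, then `nrm T ≤ c' s(T)^{-(1+ε)}`. -/
theorem stmt_4 (μ : Measure ℝ) (m c ε C K ν : ℝ) (hm : 0 < m) (hc : 0 < c)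
    (hε : 0 < ε) (hC : 0 ≤ C) (hK : 0 < K) (hν₀ : 0 < ν) (hν₁ : ν < 1)
    (hreg : ∀ δ : ℝ, 0 ≤ δ →
      μ (Set.Icc (m ^ 2 - δ) (m ^ 2 + δ) \ {m ^ 2}) ≤ ENNReal.ofReal ((c * δ ^ ε) ^ 2))
    (g : ℝ → ℝ → ℂ)
    (hgb : ∀ T : ℝ, 1 ≤ T → ∀ l : ℝ, ‖g T l‖ ≤ C / T ^ ν)
    (hgs : ∀ T : ℝ, 1 ≤ T → ∀ l : ℝ, g T l ≠ 0 → |l - m ^ 2| ≤ K / T ^ ν ∨ l = m ^ 2)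
    (hg0 : ∀ T : ℝ, g T (m ^ 2) = 0)
    (nrm : ℝ → ℝ)
    (hn : ∀ T : ℝ, 1 ≤ T → 0 ≤ nrm T ∧ (nrm T) ^ 2 = ∫ l : ℝ, ‖g T l‖ ^ 2 ∂μ) :
    ∃ c' : ℝ, ∀ T : ℝ, 1 ≤ T → nrm T ≤ c' / (T ^ ν) ^ (1 + ε) := by
  refine ⟨C * (c * K ^ ε), fun T hT => ?_⟩
  have hT0 : (0:ℝ) < T := lt_of_lt_of_le one_pos hT
  have ht : (0:ℝ) < T ^ ν := Real.rpow_pos_of_pos hT0 ν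
  set t := T ^ ν with htdef
  have htε : (0:ℝ) < t ^ ε := Real.rpow_pos_of_pos ht ε
  have hδ : (0:ℝ) ≤ K / t := le_of_lt (div_pos hK ht)
  obtain ⟨hn0, hn2⟩ := hn T hT
  set S := Set.Icc (m ^ 2 - K / t) (m ^ 2 + K / t) \ {m ^ 2} with hS
  have hSm : MeasurableSet S := measurableSet_Icc.diff (measurableSet_singleton _)
  have hμS : μ S ≤ ENNReal.ofReal ((c * (K / t) ^ ε) ^ 2) := hreg _ hδ
  have hμSfin : μ S < ⊤ := lt_of_le_of_lt hμS ENNReal.ofReal_lt_top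
  have hb : (0:ℝ) ≤ (C / t) ^ 2 := sq_nonneg _
  have hpt : ∀ l, ‖g T l‖ ^ 2 ≤ S.indicator (fun _ => (C / t) ^ 2) l := by
    intro l
    by_cases hgl : g T l = 0
    · simpa [hgl] using Set.indicator_nonneg (fun _ _ => hb) l
    · have hmem : l ∈ S := by
        refine ⟨?_, ?_⟩
        · rcases hgs T hT l hgl with h | h
          · rcases abs_le.mp h with ⟨h1, h2⟩
            exact Set.mem_Icc.mpr ⟨by linarith, by linarith⟩
          · exact (hgl (by rw [h]; exact hg0 T)).elim
        · intro hl
          exact hgl (by rw [Set.mem_singleton_iff.mp hl]; exact hg0 T)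
      rw [Set.indicator_of_mem hmem]
      exact pow_le_pow_left₀ (norm_nonneg _) (hgb T hT l) 2
  have hint : Integrable (S.indicator fun _ => (C / t) ^ 2) μ := by
    rw [integrable_indicator_iff hSm]
    exact integrableOn_const hμSfin.ne
  have hI : ∫ l, ‖g T l‖ ^ 2 ∂μ ≤ ∫ l, S.indicator (fun _ => (C / t) ^ 2) l ∂μ :=
    integral_mono_of_nonneg (Eventually.of_forall fun l => sq_nonneg _) hint
      (Eventually.of_forall hpt)
  have hIeq : ∫ l, S.indicator (fun _ => (C / t) ^ 2) l ∂μ = (μ S).toReal * (C / t) ^ 2 := by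
    rw [integral_indicator_const _ hSm]; simp [smul_eq_mul, measureReal_def]
  have hto : (μ S).toReal ≤ (c * (K / t) ^ ε) ^ 2 :=
    ENNReal.toReal_le_of_le_ofReal (sq_nonneg _) hμS
  have hbig : (0:ℝ) ≤ (C / t) * (c * (K / t) ^ ε) := by positivity
  have hsq : nrm T ^ 2 ≤ ((C / t) * (c * (K / t) ^ ε)) ^ 2 := by
    rw [hn2, mul_pow]
    calc ∫ l, ‖g T l‖ ^ 2 ∂μ ≤ (μ S).toReal * (C / t) ^ 2 := hIeq ▸ hI
      _ ≤ (c * (K / t) ^ ε) ^ 2 * (C / t) ^ 2 := mul_le_mul_of_nonneg_right hto hb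
      _ = (C / t) ^ 2 * (c * (K / t) ^ ε) ^ 2 := by ring
  have hfin : nrm T ≤ (C / t) * (c * (K / t) ^ ε) := by
    have := Real.sqrt_le_sqrt hsq
    rwa [Real.sqrt_sq hn0, Real.sqrt_sq hbig] at this
  have hKt : (K / t) ^ ε = K ^ ε / t ^ ε := Real.div_rpow hK.le ht.le ε
  have ht1 : t ^ (1 + ε) = t * t ^ ε := by
    rw [Real.rpow_add ht, Real.rpow_one]
  calc nrm T ≤ (C / t) * (c * (K / t) ^ ε) := hfin
    _ = C * (c * K ^ ε) / t ^ (1 + ε) := by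
        rw [hKt, ht1]; field_simp
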